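/- If 𝔐 = (V, ⟨·,·⟩, R) is a Riemannian model which is Jacobi–Tsankov, then R = 0. -/

import Mathlib

/-- A Riemannian Jacobi–Tsankov model has R = 0. -/
theorem stmt1 {V : Type*} [AddCommGroup V] [Module ℝ V] [FiniteDimensional ℝ V]
    (B : V →ₗ[ℝ] V →ₗ[ℝ] ℝ)
    (hBsymm : ∀ x y, B x y = B y x)
    (hBpos : ∀ x, x ≠ 0 → 0 < B x x)
    (R : V →ₗ[ℝ] V →ₗ[ℝ] V →ₗ[ℝ] V →ₗ[ℝ] ℝ)
    (hR1 : ∀ x y z w, R x y z w = -R y x z w)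
    (hR2 : ∀ x y z w, R x y z w = R z w x y)
    (hR3 : ∀ x y z w, R x y z w + R y z x w + R z x y w = 0)
    (J : V → V →ₗ[ℝ] V)
    (hJ : ∀ x y z, B (J x y) z = R y x x z)
    (hJT : ∀ x y, (J x) ∘ₗ (J y) = (J y) ∘ₗ (J x)) :
    ∀ x y z w, R x y z w = 0 := by
  -- positive definiteness: B w w = 0 → w = 0
  have hzero : ∀ w : V, B w w = 0 → w = 0 := by
    intro w hw
    by_contra h
    have := hBpos w h
    rw [hw] at this
    exact lt_irrefl 0 this
  -- R x x z w = 0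
  have hRaa : ∀ x z w, R x x z w = 0 := by
    intro x z w
    have := hR1 x x z w
    linarith
  -- antisymmetry in last two slots
  have hlast : ∀ x y z w, R x y z w = -R x y w z := by
    intro x y z w
    rw [hR2 x y z w, hR1 z w x y, hR2 w z x y]
  -- symmetry R p q q t = R t q q p
  have hsym4 : ∀ p q t, R p q q t = R t q q p := by
    intro p q t
    rw [hR2 p q q t, hR1 q t p q, hlast t q p q]
    ring
  -- J a a = 0
  have hJaa : ∀ a, J a a = 0 := by
    intro a
    apply hzero
    rw [hJ]
    exact hRaa a a (J a a)
  -- step 2 : J x (J y x) = 0, in scalar form R (J y x) x x v = 0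
  have step2 : ∀ x y v, R (J y x) x x v = 0 := by
    intro x y v
    have hc := LinearMap.congr_fun (hJT x y) x
    simp only [LinearMap.comp_apply] at hc
    rw [hJaa x, map_zero] at hc
    rw [← hJ x (J y x) v, hc]
    simp
  -- polarization: R (J a b) a a v = 0
  have step4 : ∀ a b v, R (J a b) a a v = 0 := by
    intro a b v
    have e1 : J a (a + b) = J a b := by rw [map_add, hJaa, zero_add]
    have e2 : J a (a - b) = -(J a b) := by rw [map_sub, hJaa, zero_sub]
    have h1 := step2 (a + b) a v
    have h2 := step2 (a - b) a v
    rw [e1] at h1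
    rw [e2] at h2
    simp only [map_add, map_sub, map_neg, LinearMap.add_apply, LinearMap.sub_apply,
      LinearMap.neg_apply] at h1 h2
    rw [← neg_one_smul ℝ (J a b)] at h2
    simp only [LinearMap.map_smul, LinearMap.smul_apply, smul_eq_mul] at h2
    have h3 := step2 b a v
    linarith
  -- all Jacobi operators vanish
  have step5 : ∀ a b, J a b = 0 := by
    intro a b
    apply hzero
    rw [hJ]
    rw [hsym4 b a (J a b)]
    exact step4 a b b
  -- R u a a v = 0
  have step6 : ∀ u a v, R u a a v = 0 := by
    intro u a v
    rw [← hJ a u v, step5 a u]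
    simp
  -- antisymmetry in middle slots
  have step7 : ∀ u a b v, R u a b v = -R u b a v := by
    intro u a b v
    have h := step6 u (a + b) v
    simp only [map_add, LinearMap.add_apply] at h
    have h1 := step6 u a v
    have h2 := step6 u b v
    linarith
  intro x y z w
  have b1 := hR3 x y z w
  have e1 : R y z x w = R x y z w := by
    rw [step7 y z x w, hR1 y x z w]
    ring
  have e2 : R z x y w = R x y z w := by
    rw [hR1 z x y w, step7 x z y w]
    ring
  rw [e1, e2] at b1
  linarith
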